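/- Corollary 1 (Expectation of log-beliefs ψ_{k,i}). Let θ_TX = θ₀ and run the partial-information algorithm with self-awareness, under Assumptions 1 and 2. Then for every agent k and every i ≥ 1, E[log(1/ψ_{k,i}(θ_TX))] ≤ (1/v_k) Σ_{ℓ=1}^K v_ℓ log(1/μ_{ℓ,0}(θ_TX)). -/

import Mathlib

open MeasureTheory ProbabilityTheory Filter Topology

section Aux
variable {K H : ℕ} {X : Fin K → Type} [∀ k, MeasurableSpace (X k)]

/-- One Bayesian update step of the intermediate belief, as a function of prior `m` and signal. -/
noncomputable def psiF (L : ∀ k : Fin K, Fin H → X k → ℝ) (m : Fin K → Fin H → ℝ) (s : ∀ k, X k)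
    (k : Fin K) (θ : Fin H) : ℝ :=
  m k θ * L k θ (s k) / ∑ θ', m k θ' * L k θ' (s k)

/-- The censored belief, as a function of prior and signal. -/
noncomputable def psihF (L : ∀ k : Fin K, Fin H → X k → ℝ) (θ0 : Fin H) (m : Fin K → Fin H → ℝ)
    (s : ∀ k, X k) (k : Fin K) (θ : Fin H) : ℝ :=
  if θ = θ0 then psiF L m s k θ0 else (1 - psiF L m s k θ0) / ((H : ℝ) - 1)

/-- One full step of the partial-information algorithm, combination stage. -/
noncomputable def combF (L : ∀ k : Fin K, Fin H → X k → ℝ) (a : Fin K → Fin K → ℝ) (θ0 : Fin H)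
    (m : Fin K → Fin H → ℝ) (s : ∀ k, X k) (k : Fin K) (θ : Fin H) : ℝ :=
  Real.exp (a k k * Real.log (psiF L m s k θ) +
      ∑ ℓ ∈ Finset.univ.erase k, a ℓ k * Real.log (psihF L θ0 m s ℓ θ)) /
    ∑ θ', Real.exp (a k k * Real.log (psiF L m s k θ') +
      ∑ ℓ ∈ Finset.univ.erase k, a ℓ k * Real.log (psihF L θ0 m s ℓ θ'))

lemma measurable_psiF {L : ∀ k : Fin K, Fin H → X k → ℝ} (hL : ∀ k θ, Measurable (L k θ))
    (k : Fin K) (θ : Fin H) :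
    Measurable (fun p : (Fin K → Fin H → ℝ) × (∀ k, X k) => psiF L p.1 p.2 k θ) := by
  have h1 : ∀ θ : Fin H, Measurable (fun p : (Fin K → Fin H → ℝ) × (∀ k, X k) => p.1 k θ) :=
    fun θ => (measurable_pi_apply θ).comp ((measurable_pi_apply k).comp measurable_fst)
  have h2 : ∀ θ : Fin H, Measurable (fun p : (Fin K → Fin H → ℝ) × (∀ k, X k) => L k θ (p.2 k)) :=
    fun θ => (hL k θ).comp ((measurable_pi_apply k).comp measurable_snd)
  exact ((h1 θ).mul (h2 θ)).div (Finset.measurable_sum _ fun θ' _ => (h1 θ').mul (h2 θ'))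

lemma measurable_psihF {L : ∀ k : Fin K, Fin H → X k → ℝ} (hL : ∀ k θ, Measurable (L k θ))
    (θ0 : Fin H) (k : Fin K) (θ : Fin H) :
    Measurable (fun p : (Fin K → Fin H → ℝ) × (∀ k, X k) => psihF L θ0 p.1 p.2 k θ) := by
  unfold psihF
  split
  · exact measurable_psiF hL k θ0
  · exact (measurable_const.sub (measurable_psiF hL k θ0)).div measurable_const

lemma measurable_combF {L : ∀ k : Fin K, Fin H → X k → ℝ} (hL : ∀ k θ, Measurable (L k θ))
    (a : Fin K → Fin K → ℝ) (θ0 : Fin H) (k : Fin K) (θ : Fin H) :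
    Measurable (fun p : (Fin K → Fin H → ℝ) × (∀ k, X k) => combF L a θ0 p.1 p.2 k θ) := by
  have hnum : ∀ θ : Fin H, Measurable (fun p : (Fin K → Fin H → ℝ) × (∀ k, X k) =>
      Real.exp (a k k * Real.log (psiF L p.1 p.2 k θ) +
        ∑ ℓ ∈ Finset.univ.erase k, a ℓ k * Real.log (psihF L θ0 p.1 p.2 ℓ θ))) := by
    intro θ
    exact ((measurable_const.mul (Real.measurable_log.comp (measurable_psiF hL k θ))).add
      (Finset.measurable_sum _ fun ℓ _ => measurable_const.mul
        (Real.measurable_log.comp (measurable_psihF hL θ0 ℓ θ)))).exp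
  exact (hnum θ).div (Finset.measurable_sum _ fun θ' _ => hnum θ')

lemma measurable_combF_full {K H : ℕ} {X : Fin K → Type} [∀ k, MeasurableSpace (X k)]
    {L : ∀ k : Fin K, Fin H → X k → ℝ} (hL : ∀ k θ, Measurable (L k θ))
    (a : Fin K → Fin K → ℝ) (θ0 : Fin H) :
    Measurable (fun p : (Fin K → Fin H → ℝ) × (∀ k, X k) =>
      (fun k θ => combF L a θ0 p.1 p.2 k θ : Fin K → Fin H → ℝ)) :=
  measurable_pi_lambda _ fun k => measurable_pi_lambda _ fun θ => measurable_combF hL a θ0 k θ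

end Aux

theorem expectation_of_log_intermediate_beliefs
    {Ω : Type} [mΩ : MeasurableSpace Ω] (P : Measure Ω) [IsProbabilityMeasure P]
    (K H : ℕ) (hK : 0 < K) (hH : 2 ≤ H)
    (X : Fin K → Type) [∀ k, MeasurableSpace (X k)]
    (ν : ∀ k, Measure (X k))
    (L : ∀ k : Fin K, Fin H → X k → ℝ)
    (θ0 : Fin H)
    (hLpos : ∀ k θ x, 0 < L k θ x)
    (hLmeas : ∀ k θ, Measurable (L k θ))
    (hLdens : ∀ k θ, ∫ x, L k θ x ∂(ν k) = 1)
    (ξ : ∀ k : Fin K, ℕ → Ω → X k)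
    (hξmeas : ∀ k i, Measurable (ξ k i))
    (hξdist : ∀ k (i : ℕ), 1 ≤ i →
      Measure.map (ξ k i) P = (ν k).withDensity (fun x => ENNReal.ofReal (L k θ0 x)))
    (hξindep : iIndepFun
      (fun (i : ℕ) (ω : Ω) (k : Fin K) => ξ k (i + 1) ω) P)
    (hKL : ∀ k θ θ',
      Integrable (fun x => L k θ x * Real.log (L k θ x / L k θ' x)) (ν k))
    (a : Fin K → Fin K → ℝ)
    (ha_nonneg : ∀ ℓ k, 0 ≤ a ℓ k)
    (ha_stoch : ∀ k, ∑ ℓ, a ℓ k = 1)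
    (ha_prim : ∃ n : ℕ, ∀ ℓ k, 0 < ((Matrix.of a) ^ n) ℓ k)
    (v : Fin K → ℝ)
    (hv_pos : ∀ ℓ, 0 < v ℓ)
    (hv_sum : ∑ ℓ, v ℓ = 1)
    (hv_eig : ∀ ℓ, ∑ k, a ℓ k * v k = v ℓ)
    (ha_self : ∀ k, 0 < a k k)
    (θTX : Fin H)
    (hθTX : θTX = θ0)
    (μb ψ ψh : Fin K → ℕ → Fin H → Ω → ℝ)
    (μinit : Fin K → Fin H → ℝ)
    (hμinit_pos : ∀ k θ, 0 < μinit k θ)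
    (hμinit_sum : ∀ k, ∑ θ, μinit k θ = 1)
    (hμb0 : ∀ k θ ω, μb k 0 θ ω = μinit k θ)
    (hψ : ∀ k (i : ℕ) θ ω, ψ k (i + 1) θ ω =
      μb k i θ ω * L k θ (ξ k (i + 1) ω) /
        ∑ θ', μb k i θ' ω * L k θ' (ξ k (i + 1) ω))
    (hψh_tx : ∀ k (i : ℕ) ω, ψh k (i + 1) θTX ω = ψ k (i + 1) θTX ω)
    (hψh_ntx : ∀ k (i : ℕ) θ ω, θ ≠ θTX →
      ψh k (i + 1) θ ω = (1 - ψ k (i + 1) θTX ω) / ((H : ℝ) - 1))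
    (hcomb : ∀ k (i : ℕ) θ ω, μb k (i + 1) θ ω =
      Real.exp (a k k * Real.log (ψ k (i + 1) θ ω) +
          ∑ ℓ ∈ Finset.univ.erase k, a ℓ k * Real.log (ψh ℓ (i + 1) θ ω)) /
        ∑ θ', Real.exp (a k k * Real.log (ψ k (i + 1) θ' ω) +
          ∑ ℓ ∈ Finset.univ.erase k, a ℓ k * Real.log (ψh ℓ (i + 1) θ' ω)))
    :
    ∀ (k : Fin K) (i : ℕ),
      (∫ ω, Real.log (1 / ψ k (i + 1) θTX ω) ∂P) ≤
        (1 / v k) * ∑ ℓ, v ℓ * Real.log (1 / μinit ℓ θTX) := by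
  simp only [hθTX] at hψh_tx hψh_ntx ⊢
  haveI : Nonempty (Fin H) := ⟨θ0⟩
  have hHR : (1 : ℝ) < (H : ℝ) := by exact_mod_cast hH.trans_lt' one_lt_two
  have hθ1ex : ∃ θ1 : Fin H, θ1 ≠ θ0 := by
    have : Nontrivial (Fin H) := by
      obtain ⟨m, rfl⟩ : ∃ m, H = m + 2 := ⟨H - 2, by omega⟩
      infer_instance
    exact exists_ne θ0
  -- ### Pointwise facts about μb
  have hμpos : ∀ i k θ ω, 0 < μb k i θ ω := by
    intro i k θ ω
    cases i with
    | zero => rw [hμb0]; exact hμinit_pos k θ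
    | succ i =>
      rw [hcomb]
      exact div_pos (Real.exp_pos _)
        (Finset.sum_pos (fun _ _ => Real.exp_pos _) Finset.univ_nonempty)
  have hμsum : ∀ i k ω, ∑ θ, μb k i θ ω = 1 := by
    intro i k ω
    cases i with
    | zero => simp only [hμb0]; exact hμinit_sum k
    | succ i =>
      rw [Finset.sum_congr rfl (fun θ _ => hcomb k i θ ω), ← Finset.sum_div]
      exact div_self (Finset.sum_pos (fun _ _ => Real.exp_pos _) Finset.univ_nonempty).ne'
  have hμle1 : ∀ i k θ ω, μb k i θ ω ≤ 1 := by
    intro i k θ ω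
    rw [← hμsum i k ω]
    exact Finset.single_le_sum (fun θ' _ => (hμpos i k θ' ω).le) (Finset.mem_univ θ)
  -- ### Pointwise facts about ψ, ψh
  have hDpos : ∀ i k ω, 0 < ∑ θ', μb k i θ' ω * L k θ' (ξ k (i + 1) ω) := fun i k ω =>
    Finset.sum_pos (fun θ' _ => mul_pos (hμpos i k θ' ω) (hLpos k θ' _)) Finset.univ_nonempty
  have hψpos : ∀ i k θ ω, 0 < ψ k (i + 1) θ ω := by
    intro i k θ ω
    rw [hψ]
    exact div_pos (mul_pos (hμpos i k θ ω) (hLpos k θ _)) (hDpos i k ω)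
  have hψsum : ∀ i k ω, ∑ θ, ψ k (i + 1) θ ω = 1 := by
    intro i k ω
    rw [Finset.sum_congr rfl (fun θ _ => hψ k i θ ω), ← Finset.sum_div]
    exact div_self (hDpos i k ω).ne'
  have hψlt1 : ∀ i k ω, ψ k (i + 1) θ0 ω < 1 := by
    intro i k ω
    rw [hψ, div_lt_one (hDpos i k ω)]
    obtain ⟨θ1, hθ1⟩ := hθ1ex
    have hsplit : μb k i θ0 ω * L k θ0 (ξ k (i + 1) ω) +
        ∑ θ' ∈ Finset.univ.erase θ0, μb k i θ' ω * L k θ' (ξ k (i + 1) ω) =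
        ∑ θ', μb k i θ' ω * L k θ' (ξ k (i + 1) ω) :=
      Finset.add_sum_erase Finset.univ
        (fun θ' => μb k i θ' ω * L k θ' (ξ k (i + 1) ω)) (Finset.mem_univ θ0)
    have hpos' : 0 < ∑ θ' ∈ Finset.univ.erase θ0, μb k i θ' ω * L k θ' (ξ k (i + 1) ω) :=
      Finset.sum_pos (fun θ' _ => mul_pos (hμpos i k θ' ω) (hLpos k θ' _))
        ⟨θ1, Finset.mem_erase.mpr ⟨hθ1, Finset.mem_univ θ1⟩⟩
    linarith
  have hψhpos : ∀ i k θ ω, 0 < ψh k (i + 1) θ ω := by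
    intro i k θ ω
    by_cases h : θ = θ0
    · rw [h, hψh_tx]; exact hψpos i k θ0 ω
    · rw [hψh_ntx k i θ ω h]
      apply div_pos
      · linarith [hψlt1 i k ω]
      · linarith
  have hψhsum : ∀ i k ω, ∑ θ, ψh k (i + 1) θ ω = 1 := by
    intro i k ω
    rw [← Finset.add_sum_erase _ _ (Finset.mem_univ θ0), hψh_tx]
    rw [Finset.sum_congr rfl (fun θ hθ => hψh_ntx k i θ ω (Finset.ne_of_mem_erase hθ))]
    rw [Finset.sum_const, Finset.card_erase_of_mem (Finset.mem_univ θ0), Finset.card_univ,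
      Fintype.card_fin, nsmul_eq_mul]
    have hc : ((H - 1 : ℕ) : ℝ) = (H : ℝ) - 1 := by rw [Nat.cast_sub (by omega)]; norm_num
    rw [hc, mul_div_cancel₀ _ (by linarith : (H : ℝ) - 1 ≠ 0)]
    ring
  -- ### AM-GM : combination step inequality
  have hcombineq : ∀ i k ω, Real.log (1 / μb k (i + 1) θ0 ω) ≤
      ∑ ℓ, a ℓ k * Real.log (1 / ψ ℓ (i + 1) θ0 ω) := by
    intro i k ω
    have hgpos : ∀ ℓ (θ' : Fin H),
        0 < (if ℓ = k then ψ k (i + 1) θ' ω else ψh ℓ (i + 1) θ' ω) := by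
      intro ℓ θ'
      by_cases h : ℓ = k
      · rw [if_pos h]; exact hψpos i k θ' ω
      · rw [if_neg h]; exact hψhpos i ℓ θ' ω
    have hgsum : ∀ ℓ, (∑ θ', if ℓ = k then ψ k (i + 1) θ' ω else ψh ℓ (i + 1) θ' ω) = 1 := by
      intro ℓ
      by_cases h : ℓ = k
      · simp only [if_pos h]; exact hψsum i k ω
      · simp only [if_neg h]; exact hψhsum i ℓ ω
    have hgθ0 : ∀ ℓ, (if ℓ = k then ψ k (i + 1) θ0 ω else ψh ℓ (i + 1) θ0 ω)
        = ψ ℓ (i + 1) θ0 ω := by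
      intro ℓ
      by_cases h : ℓ = k
      · rw [if_pos h, h]
      · rw [if_neg h, hψh_tx]
    have key1 : ∀ θ' : Fin H, a k k * Real.log (ψ k (i + 1) θ' ω) +
        ∑ ℓ ∈ Finset.univ.erase k, a ℓ k * Real.log (ψh ℓ (i + 1) θ' ω) =
        ∑ ℓ, a ℓ k * Real.log (if ℓ = k then ψ k (i + 1) θ' ω else ψh ℓ (i + 1) θ' ω) := by
      intro θ'
      rw [← Finset.add_sum_erase Finset.univ
        (fun ℓ => a ℓ k * Real.log (if ℓ = k then ψ k (i + 1) θ' ω else ψh ℓ (i + 1) θ' ω))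
        (Finset.mem_univ k)]
      congr 1
      · rw [if_pos rfl]
      · exact Finset.sum_congr rfl fun ℓ hℓ => by rw [if_neg (Finset.ne_of_mem_erase hℓ)]
    have hexple : ∀ θ' : Fin H,
        Real.exp (∑ ℓ, a ℓ k * Real.log
            (if ℓ = k then ψ k (i + 1) θ' ω else ψh ℓ (i + 1) θ' ω)) ≤
          ∑ ℓ, a ℓ k * (if ℓ = k then ψ k (i + 1) θ' ω else ψh ℓ (i + 1) θ' ω) := by
      intro θ'
      have hrw : Real.exp (∑ ℓ, a ℓ k * Real.log
          (if ℓ = k then ψ k (i + 1) θ' ω else ψh ℓ (i + 1) θ' ω)) =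
          ∏ ℓ, (if ℓ = k then ψ k (i + 1) θ' ω else ψh ℓ (i + 1) θ' ω) ^ (a ℓ k) := by
        rw [Real.exp_sum]
        exact Finset.prod_congr rfl fun ℓ _ => by
          rw [Real.rpow_def_of_pos (hgpos ℓ θ'), mul_comm]
      rw [hrw]
      exact Real.geom_mean_le_arith_mean_weighted _ _ _ (fun ℓ _ => ha_nonneg ℓ k)
        (ha_stoch k) (fun ℓ _ => (hgpos ℓ θ').le)
    have hZ : (∑ θ', Real.exp (a k k * Real.log (ψ k (i + 1) θ' ω) +
        ∑ ℓ ∈ Finset.univ.erase k, a ℓ k * Real.log (ψh ℓ (i + 1) θ' ω))) ≤ 1 := by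
      calc (∑ θ', Real.exp (a k k * Real.log (ψ k (i + 1) θ' ω) +
            ∑ ℓ ∈ Finset.univ.erase k, a ℓ k * Real.log (ψh ℓ (i + 1) θ' ω)))
          = ∑ θ', Real.exp (∑ ℓ, a ℓ k * Real.log
              (if ℓ = k then ψ k (i + 1) θ' ω else ψh ℓ (i + 1) θ' ω)) :=
            Finset.sum_congr rfl fun θ' _ => by rw [key1 θ']
        _ ≤ ∑ θ', ∑ ℓ, a ℓ k * (if ℓ = k then ψ k (i + 1) θ' ω else ψh ℓ (i + 1) θ' ω) :=
            Finset.sum_le_sum fun θ' _ => hexple θ'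
        _ = ∑ ℓ, a ℓ k * ∑ θ', (if ℓ = k then ψ k (i + 1) θ' ω else ψh ℓ (i + 1) θ' ω) := by
            rw [Finset.sum_comm]
            exact Finset.sum_congr rfl fun ℓ _ => (Finset.mul_sum _ _ _).symm
        _ = ∑ ℓ, a ℓ k * 1 := Finset.sum_congr rfl fun ℓ _ => by rw [hgsum ℓ]
        _ = 1 := by simp only [mul_one]; exact ha_stoch k
    have hZpos : 0 < ∑ θ', Real.exp (a k k * Real.log (ψ k (i + 1) θ' ω) +
        ∑ ℓ ∈ Finset.univ.erase k, a ℓ k * Real.log (ψh ℓ (i + 1) θ' ω)) :=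
      Finset.sum_pos (fun _ _ => Real.exp_pos _) Finset.univ_nonempty
    have hμlow : Real.exp (a k k * Real.log (ψ k (i + 1) θ0 ω) +
        ∑ ℓ ∈ Finset.univ.erase k, a ℓ k * Real.log (ψh ℓ (i + 1) θ0 ω)) ≤
        μb k (i + 1) θ0 ω := by
      rw [hcomb k i θ0 ω, le_div_iff₀ hZpos]
      exact le_trans (mul_le_mul_of_nonneg_left hZ (Real.exp_pos _).le) (by rw [mul_one])
    have h2 := Real.log_le_log (Real.exp_pos _) hμlow
    rw [Real.log_exp, key1 θ0] at h2
    have h3 : ∑ ℓ, a ℓ k * Real.log (1 / ψ ℓ (i + 1) θ0 ω) +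
        ∑ ℓ, a ℓ k * Real.log (if ℓ = k then ψ k (i + 1) θ0 ω else ψh ℓ (i + 1) θ0 ω) = 0 := by
      rw [← Finset.sum_add_distrib]
      apply Finset.sum_eq_zero
      intro ℓ _
      rw [hgθ0 ℓ, one_div, Real.log_inv]
      ring
    rw [one_div, Real.log_inv]
    linarith
  -- ### ψ decomposition with likelihood ratios
  have hψdecomp : ∀ i k ω, Real.log (1 / ψ k (i + 1) θ0 ω) ≤
      Real.log (1 / μb k i θ0 ω) +
        ((∑ θ', μb k i θ' ω * (L k θ' (ξ k (i + 1) ω) / L k θ0 (ξ k (i + 1) ω))) - 1) := by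
    intro i k ω
    have hTD : (∑ θ', μb k i θ' ω * (L k θ' (ξ k (i + 1) ω) / L k θ0 (ξ k (i + 1) ω))) =
        (∑ θ', μb k i θ' ω * L k θ' (ξ k (i + 1) ω)) / L k θ0 (ξ k (i + 1) ω) := by
      rw [Finset.sum_div]
      exact Finset.sum_congr rfl fun θ' _ => (mul_div_assoc _ _ _).symm
    have hTpos : 0 < ∑ θ', μb k i θ' ω * (L k θ' (ξ k (i + 1) ω) / L k θ0 (ξ k (i + 1) ω)) := by
      rw [hTD]; exact div_pos (hDpos i k ω) (hLpos k θ0 _)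
    have hψeq : ψ k (i + 1) θ0 ω = μb k i θ0 ω /
        (∑ θ', μb k i θ' ω * (L k θ' (ξ k (i + 1) ω) / L k θ0 (ξ k (i + 1) ω))) := by
      rw [hψ, hTD, div_div_eq_mul_div]
    have hlog : Real.log (1 / ψ k (i + 1) θ0 ω) =
        Real.log (∑ θ', μb k i θ' ω * (L k θ' (ξ k (i + 1) ω) / L k θ0 (ξ k (i + 1) ω))) +
          Real.log (1 / μb k i θ0 ω) := by
      rw [hψeq, one_div, one_div, Real.log_inv, Real.log_inv,
        Real.log_div (hμpos i k θ0 ω).ne' hTpos.ne']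
      ring
    have := Real.log_le_sub_one_of_pos hTpos
    linarith
  -- ### One-step transition function equality
  have hstep : ∀ (i : ℕ) (k : Fin K) (θ : Fin H) (ω : Ω),
      combF L a θ0 (fun k' θ' => μb k' i θ' ω) (fun k' => ξ k' (i + 1) ω) k θ =
        μb k (i + 1) θ ω := by
    intro i k θ ω
    have hps : ∀ (k' : Fin K) (θ' : Fin H),
        psiF L (fun k' θ' => μb k' i θ' ω) (fun k' => ξ k' (i + 1) ω) k' θ' =
          ψ k' (i + 1) θ' ω := fun k' θ' => (hψ k' i θ' ω).symm
    have hph : ∀ (k' : Fin K) (θ' : Fin H),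
        psihF L θ0 (fun k' θ' => μb k' i θ' ω) (fun k' => ξ k' (i + 1) ω) k' θ' =
          ψh k' (i + 1) θ' ω := by
      intro k' θ'
      unfold psihF
      by_cases h : θ' = θ0
      · rw [if_pos h, hps, h, hψh_tx]
      · rw [if_neg h, hps, hψh_ntx k' i θ' ω h]
    unfold combF
    simp only [hps, hph]
    exact (hcomb k i θ ω).symm
  -- ### Factorization of μb through the signal history
  have hfact : ∀ i : ℕ, ∃ G : ((↥(Finset.range i)) → ∀ k, X k) → (Fin K → Fin H → ℝ),
      Measurable G ∧ ∀ ω, G (fun j => fun k => ξ k ((j : ℕ) + 1) ω) =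
        fun k θ => μb k i θ ω := by
    intro i
    induction i with
    | zero =>
      refine ⟨fun _ => fun k θ => μinit k θ, measurable_const, fun ω => ?_⟩
      funext k θ
      exact (hμb0 k θ ω).symm
    | succ i ih =>
      obtain ⟨G, hGm, hGfe⟩ := ih
      refine ⟨(fun p : (Fin K → Fin H → ℝ) × (∀ k, X k) =>
          (fun k θ => combF L a θ0 p.1 p.2 k θ : Fin K → Fin H → ℝ)) ∘
        (fun t : (↥(Finset.range (i+1))) → ∀ k, X k =>
          (G (fun j => t ⟨(j : ℕ), Finset.mem_range.mpr
              (Nat.lt_succ_of_lt (Finset.mem_range.mp j.2))⟩),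
            t ⟨i, Finset.mem_range.mpr (Nat.lt_succ_self i)⟩)), ?_, ?_⟩
      · exact (measurable_combF_full hLmeas a θ0).comp
          ((hGm.comp (measurable_pi_lambda _ fun j => measurable_pi_apply _)).prodMk
            (measurable_pi_apply _))
      · intro ω
        funext k θ
        show combF L a θ0 (G (fun j => fun k' => ξ k' ((j : ℕ) + 1) ω))
          (fun k' => ξ k' (i + 1) ω) k θ = μb k (i + 1) θ ω
        rw [hGfe ω]
        exact hstep i k θ ω
  -- ### Measurability of μb and ψ
  have hμmeas : ∀ i k θ, Measurable (fun ω => μb k i θ ω) := by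
    intro i k θ
    obtain ⟨G, hGm, hGfe⟩ := hfact i
    have he : (fun ω => μb k i θ ω) =
        fun ω => G (fun j => fun k' => ξ k' ((j : ℕ) + 1) ω) k θ := by
      funext ω; rw [hGfe ω]
    rw [he]
    exact (measurable_pi_apply θ).comp ((measurable_pi_apply k).comp
      (hGm.comp (measurable_pi_lambda _ fun j => measurable_pi_lambda _ fun k' =>
        hξmeas k' _)))
  have hψmeas : ∀ i k θ, Measurable (fun ω => ψ k (i + 1) θ ω) := by
    intro i k θ
    have he : (fun ω => ψ k (i + 1) θ ω) = fun ω =>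
        μb k i θ ω * L k θ (ξ k (i + 1) ω) /
          ∑ θ', μb k i θ' ω * L k θ' (ξ k (i + 1) ω) := funext fun ω => hψ k i θ ω
    rw [he]
    exact ((hμmeas i k θ).mul ((hLmeas k θ).comp (hξmeas k (i + 1)))).div
      (Finset.measurable_sum _ fun θ' _ =>
        (hμmeas i k θ').mul ((hLmeas k θ').comp (hξmeas k (i + 1))))
  -- ### Independence of beliefs and fresh likelihood ratios
  have hindep : ∀ (i : ℕ) (k : Fin K) (θ' : Fin H),
      IndepFun (fun ω => μb k i θ' ω)
        (fun ω => L k θ' (ξ k (i + 1) ω) / L k θ0 (ξ k (i + 1) ω)) P := by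
    intro i k θ'
    obtain ⟨G, hGm, hGfe⟩ := hfact i
    have hmeasb : ∀ j : ℕ, Measurable (fun ω (k' : Fin K) => ξ k' (j + 1) ω) :=
      fun j => measurable_pi_lambda _ fun k' => hξmeas k' (j + 1)
    have hbase := hξindep.indepFun_finset (Finset.range i) {i}
      (by simp [Finset.disjoint_left]; omega) hmeasb
    have h2 := hbase.comp
      (show Measurable fun t : (↥(Finset.range i)) → (∀ k', X k') => G t k θ' from
        (measurable_pi_apply θ').comp ((measurable_pi_apply k).comp hGm))
      (show Measurable fun t : (↥({i} : Finset ℕ)) → (∀ k', X k') =>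
          L k θ' (t ⟨i, Finset.mem_singleton_self i⟩ k) /
            L k θ0 (t ⟨i, Finset.mem_singleton_self i⟩ k) from
        ((hLmeas k θ').comp ((measurable_pi_apply k).comp (measurable_pi_apply _))).div
          ((hLmeas k θ0).comp ((measurable_pi_apply k).comp (measurable_pi_apply _))))
    have e1 : (fun ω => μb k i θ' ω) =
        (fun t : (↥(Finset.range i)) → (∀ k', X k') => G t k θ') ∘
          (fun ω (j : ↥(Finset.range i)) => fun k' => ξ k' ((j : ℕ) + 1) ω) :=
      funext fun ω => (congrFun (congrFun (hGfe ω) k) θ').symm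
    rw [e1]
    exact h2
    -- ### Integrability of likelihoods and likelihood ratios
  have hLint : ∀ k θ, Integrable (L k θ) (ν k) := by
    intro k θ
    by_contra h
    have h1 := hLdens k θ
    rw [integral_undef h] at h1
    exact one_ne_zero h1.symm
  have hRfact : ∀ (i : ℕ) (k : Fin K) (θ' : Fin H),
      Integrable (fun ω => L k θ' (ξ k (i + 1) ω) / L k θ0 (ξ k (i + 1) ω)) P ∧
        ∫ ω, L k θ' (ξ k (i + 1) ω) / L k θ0 (ξ k (i + 1) ω) ∂P = 1 := by
    intro i k θ'
    have hg : Measurable (fun x : X k => L k θ' x / L k θ0 x) :=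
      (hLmeas k θ').div (hLmeas k θ0)
    have hmap := hξdist k (i + 1) (Nat.le_add_left 1 i)
    have hd : (fun x : X k => ENNReal.ofReal (L k θ0 x)) =
        fun x => ((L k θ0 x).toNNReal : ENNReal) := rfl
    have hsmul : (fun x : X k => (L k θ0 x).toNNReal • (L k θ' x / L k θ0 x)) =
        fun x => L k θ' x := by
      funext x
      rw [NNReal.smul_def, Real.coe_toNNReal _ (hLpos k θ0 x).le, smul_eq_mul, mul_comm,
        div_mul_cancel₀ _ (hLpos k θ0 x).ne']
    constructor
    · have h1 : Integrable ((fun x : X k => L k θ' x / L k θ0 x) ∘ (ξ k (i + 1))) P := by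
        rw [← integrable_map_measure hg.aestronglyMeasurable (hξmeas k (i + 1)).aemeasurable,
          hmap, hd, integrable_withDensity_iff_integrable_smul (hLmeas k θ0).real_toNNReal,
          hsmul]
        exact hLint k θ'
      exact h1
    · calc ∫ ω, L k θ' (ξ k (i + 1) ω) / L k θ0 (ξ k (i + 1) ω) ∂P
          = ∫ x, L k θ' x / L k θ0 x ∂(Measure.map (ξ k (i + 1)) P) :=
            (integral_map (hξmeas k (i + 1)).aemeasurable hg.aestronglyMeasurable).symm
        _ = 1 := by
            rw [hmap, hd, integral_withDensity_eq_integral_smul (hLmeas k θ0).real_toNNReal,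
              hsmul]
            exact hLdens k θ'
  have hμint : ∀ i k θ, Integrable (fun ω => μb k i θ ω) P := by
    intro i k θ
    refine Integrable.mono' (integrable_const (1 : ℝ)) (hμmeas i k θ).aestronglyMeasurable
      (ae_of_all _ fun ω => ?_)
    rw [Real.norm_eq_abs, abs_of_pos (hμpos i k θ ω)]
    exact hμle1 i k θ ω
  have hmulint : ∀ (i : ℕ) (k : Fin K) (θ' : Fin H),
      Integrable (fun ω => μb k i θ' ω *
        (L k θ' (ξ k (i + 1) ω) / L k θ0 (ξ k (i + 1) ω))) P := by
    intro i k θ'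
    have h1 := (hindep i k θ').integrable_mul (hμint i k θ') (hRfact i k θ').1
    exact h1
  have hTint : ∀ i k, Integrable (fun ω => ∑ θ', μb k i θ' ω *
      (L k θ' (ξ k (i + 1) ω) / L k θ0 (ξ k (i + 1) ω))) P :=
    fun i k => integrable_finset_sum _ fun θ' _ => hmulint i k θ'
  have hET : ∀ i k, ∫ ω, (∑ θ', μb k i θ' ω *
      (L k θ' (ξ k (i + 1) ω) / L k θ0 (ξ k (i + 1) ω))) ∂P = 1 := by
    intro i k
    rw [integral_finset_sum _ (fun θ' _ => hmulint i k θ')]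
    have heach : ∀ θ' : Fin H, ∫ ω, μb k i θ' ω *
        (L k θ' (ξ k (i + 1) ω) / L k θ0 (ξ k (i + 1) ω)) ∂P = ∫ ω, μb k i θ' ω ∂P := by
      intro θ'
      have hpm := (hindep i k θ').integral_mul_eq_mul_integral (hμint i k θ').aestronglyMeasurable
        (hRfact i k θ').1.aestronglyMeasurable
      have h1 : integral P ((fun ω => μb k i θ' ω) *
          (fun ω => L k θ' (ξ k (i + 1) ω) / L k θ0 (ξ k (i + 1) ω))) =
          ∫ ω, μb k i θ' ω * (L k θ' (ξ k (i + 1) ω) / L k θ0 (ξ k (i + 1) ω)) ∂P := rfl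
      rw [h1] at hpm
      rw [hpm, (hRfact i k θ').2, mul_one]
    rw [Finset.sum_congr rfl fun θ' _ => heach θ']
    rw [← integral_finset_sum _ (fun θ' _ => hμint i k θ')]
    have h2 : (fun ω => ∑ θ', μb k i θ' ω) = fun _ => (1 : ℝ) :=
      funext fun ω => hμsum i k ω
    rw [h2, integral_const]
    simp
  -- ### log-integrands : nonnegativity and measurability
  have hψlognn : ∀ i k ω, 0 ≤ Real.log (1 / ψ k (i + 1) θ0 ω) := by
    intro i k ω
    apply Real.log_nonneg
    rw [le_div_iff₀ (hψpos i k θ0 ω), one_mul]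
    exact (hψlt1 i k ω).le
  have hμlognn : ∀ i k ω, 0 ≤ Real.log (1 / μb k i θ0 ω) := by
    intro i k ω
    apply Real.log_nonneg
    rw [le_div_iff₀ (hμpos i k θ0 ω), one_mul]
    exact hμle1 i k θ0 ω
  have hψlogmeas : ∀ i k, Measurable (fun ω => Real.log (1 / ψ k (i + 1) θ0 ω)) :=
    fun i k => Real.measurable_log.comp (measurable_const.div (hψmeas i k θ0))
  have hμlogmeas : ∀ i k, Measurable (fun ω => Real.log (1 / μb k i θ0 ω)) :=
    fun i k => Real.measurable_log.comp (measurable_const.div (hμmeas i k θ0))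
  have hT0 : ∀ i k ω, 0 ≤ ∑ θ', μb k i θ' ω *
      (L k θ' (ξ k (i + 1) ω) / L k θ0 (ξ k (i + 1) ω)) :=
    fun i k ω => Finset.sum_nonneg fun θ' _ => mul_nonneg (hμpos i k θ' ω).le
      (div_nonneg (hLpos k θ' _).le (hLpos k θ0 _).le)
  have hψlogint : ∀ i : ℕ, (∀ k, Integrable (fun ω => Real.log (1 / μb k i θ0 ω)) P) →
      ∀ k, Integrable (fun ω => Real.log (1 / ψ k (i + 1) θ0 ω)) P := by
    intro i hint k
    have hgint : Integrable (fun ω => Real.log (1 / μb k i θ0 ω) +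
        ∑ θ', μb k i θ' ω * (L k θ' (ξ k (i + 1) ω) / L k θ0 (ξ k (i + 1) ω))) P :=
      (hint k).add (hTint i k)
    refine Integrable.mono' hgint (hψlogmeas i k).aestronglyMeasurable
      (ae_of_all _ fun ω => ?_)
    rw [Real.norm_eq_abs, abs_of_nonneg (hψlognn i k ω)]
    have h1 := hψdecomp i k ω
    linarith [hμlognn i k ω, hT0 i k ω]
  have hψEbd : ∀ i : ℕ, (∀ k, Integrable (fun ω => Real.log (1 / μb k i θ0 ω)) P) →
      ∀ k, ∫ ω, Real.log (1 / ψ k (i + 1) θ0 ω) ∂P ≤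
        ∫ ω, Real.log (1 / μb k i θ0 ω) ∂P := by
    intro i hint k
    have hTm1 : Integrable (fun ω =>
        (∑ θ', μb k i θ' ω * (L k θ' (ξ k (i + 1) ω) / L k θ0 (ξ k (i + 1) ω))) - 1) P :=
      (hTint i k).sub (integrable_const 1)
    have h1 : ∫ ω, Real.log (1 / ψ k (i + 1) θ0 ω) ∂P ≤
        ∫ ω, (Real.log (1 / μb k i θ0 ω) +
          ((∑ θ', μb k i θ' ω * (L k θ' (ξ k (i + 1) ω) / L k θ0 (ξ k (i + 1) ω))) - 1)) ∂P :=
      integral_mono (hψlogint i hint k) ((hint k).add hTm1)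
        (fun ω => hψdecomp i k ω)
    have hIadd : ∫ ω, (Real.log (1 / μb k i θ0 ω) +
        ((∑ θ', μb k i θ' ω * (L k θ' (ξ k (i + 1) ω) / L k θ0 (ξ k (i + 1) ω))) - 1)) ∂P =
        (∫ ω, Real.log (1 / μb k i θ0 ω) ∂P) +
          ((∫ ω, (∑ θ', μb k i θ' ω * (L k θ' (ξ k (i + 1) ω) / L k θ0 (ξ k (i + 1) ω))) ∂P) -
            ∫ _ω, (1 : ℝ) ∂P) := by
      rw [integral_add (hint k) hTm1, integral_sub (hTint i k) (integrable_const 1)]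
    rw [hIadd, hET i k] at h1
    have h2 : ∫ _ω, (1 : ℝ) ∂P = 1 := by simp
    rw [h2] at h1
    linarith
  -- ### Main induction
  have main : ∀ i : ℕ, (∀ k, Integrable (fun ω => Real.log (1 / μb k i θ0 ω)) P) ∧
      (∑ k, v k * ∫ ω, Real.log (1 / μb k i θ0 ω) ∂P ≤
        ∑ ℓ, v ℓ * Real.log (1 / μinit ℓ θ0)) := by
    intro i
    induction i with
    | zero =>
      constructor
      · intro k
        have he : (fun ω => Real.log (1 / μb k 0 θ0 ω)) =
            fun _ => Real.log (1 / μinit k θ0) := funext fun ω => by rw [hμb0]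
        rw [he]
        exact integrable_const _
      · apply le_of_eq
        refine Finset.sum_congr rfl fun ℓ _ => ?_
        congr 1
        have he : (fun ω => Real.log (1 / μb ℓ 0 θ0 ω)) =
            fun _ => Real.log (1 / μinit ℓ θ0) := funext fun ω => by rw [hμb0]
        rw [he, integral_const]
        simp
    | succ i ih =>
      obtain ⟨ihint, ihbd⟩ := ih
      have hμint1 : ∀ k, Integrable (fun ω => Real.log (1 / μb k (i + 1) θ0 ω)) P := by
        intro k
        have hsumint : Integrable (fun ω =>
            ∑ ℓ, a ℓ k * Real.log (1 / ψ ℓ (i + 1) θ0 ω)) P :=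
          integrable_finset_sum _ fun ℓ _ => (hψlogint i ihint ℓ).const_mul (a ℓ k)
        refine Integrable.mono' hsumint
          (hμlogmeas (i + 1) k).aestronglyMeasurable (ae_of_all _ fun ω => ?_)
        rw [Real.norm_eq_abs, abs_of_nonneg (hμlognn (i + 1) k ω)]
        exact hcombineq i k ω
      refine ⟨hμint1, ?_⟩
      have step1 : ∀ k, ∫ ω, Real.log (1 / μb k (i + 1) θ0 ω) ∂P ≤
          ∑ ℓ, a ℓ k * ∫ ω, Real.log (1 / ψ ℓ (i + 1) θ0 ω) ∂P := by
        intro k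
        have hsumint : Integrable (fun ω =>
            ∑ ℓ, a ℓ k * Real.log (1 / ψ ℓ (i + 1) θ0 ω)) P :=
          integrable_finset_sum _ fun ℓ _ => (hψlogint i ihint ℓ).const_mul (a ℓ k)
        have h1 := integral_mono (hμint1 k) hsumint (fun ω => hcombineq i k ω)
        rw [integral_finset_sum _ (fun ℓ _ => (hψlogint i ihint ℓ).const_mul (a ℓ k))] at h1
        simpa only [integral_const_mul] using h1
      calc ∑ k, v k * ∫ ω, Real.log (1 / μb k (i + 1) θ0 ω) ∂P
          ≤ ∑ k, v k * ∑ ℓ, a ℓ k * ∫ ω, Real.log (1 / ψ ℓ (i + 1) θ0 ω) ∂P :=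
            Finset.sum_le_sum fun k _ => mul_le_mul_of_nonneg_left (step1 k) (hv_pos k).le
        _ = ∑ ℓ, (∑ k, a ℓ k * v k) * ∫ ω, Real.log (1 / ψ ℓ (i + 1) θ0 ω) ∂P := by
            simp only [Finset.mul_sum]
            rw [Finset.sum_comm]
            exact Finset.sum_congr rfl fun ℓ _ => by
              rw [Finset.sum_mul]
              exact Finset.sum_congr rfl fun k _ => by ring
        _ = ∑ ℓ, v ℓ * ∫ ω, Real.log (1 / ψ ℓ (i + 1) θ0 ω) ∂P :=
            Finset.sum_congr rfl fun ℓ _ => by rw [hv_eig ℓ]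
        _ ≤ ∑ ℓ, v ℓ * ∫ ω, Real.log (1 / μb ℓ i θ0 ω) ∂P :=
            Finset.sum_le_sum fun ℓ _ =>
              mul_le_mul_of_nonneg_left (hψEbd i ihint ℓ) (hv_pos ℓ).le
        _ ≤ ∑ ℓ, v ℓ * Real.log (1 / μinit ℓ θ0) := ihbd
  -- ### Conclusion
  intro k i
  obtain ⟨ihint, ihbd⟩ := main i
  have hIψnn : ∀ ℓ, 0 ≤ ∫ ω, Real.log (1 / ψ ℓ (i + 1) θ0 ω) ∂P :=
    fun ℓ => integral_nonneg fun ω => hψlognn i ℓ ω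
  have h2 : v k * ∫ ω, Real.log (1 / ψ k (i + 1) θ0 ω) ∂P ≤
      ∑ ℓ, v ℓ * ∫ ω, Real.log (1 / ψ ℓ (i + 1) θ0 ω) ∂P :=
    Finset.single_le_sum (f := fun ℓ => v ℓ * ∫ ω, Real.log (1 / ψ ℓ (i + 1) θ0 ω) ∂P)
      (fun ℓ _ => mul_nonneg (hv_pos ℓ).le (hIψnn ℓ)) (Finset.mem_univ k)
  have h3 : ∑ ℓ, v ℓ * ∫ ω, Real.log (1 / ψ ℓ (i + 1) θ0 ω) ∂P ≤
      ∑ ℓ, v ℓ * ∫ ω, Real.log (1 / μb ℓ i θ0 ω) ∂P :=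
    Finset.sum_le_sum fun ℓ _ => mul_le_mul_of_nonneg_left (hψEbd i ihint ℓ) (hv_pos ℓ).le
  have h5 : v k * ∫ ω, Real.log (1 / ψ k (i + 1) θ0 ω) ∂P ≤
      ∑ ℓ, v ℓ * Real.log (1 / μinit ℓ θ0) := le_trans h2 (le_trans h3 ihbd)
  rw [div_mul_eq_mul_div, one_mul, le_div_iff₀ (hv_pos k)]
  linarith [h5, mul_comm (v k) (∫ ω, Real.log (1 / ψ k (i + 1) θ0 ω) ∂P)]
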